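/- Global asymptotic stability of the stationary population distribution: if A is irreducible and ν > 0, then for every x ∈ ℝ^ℓ with x_j ≥ 0 for all j and Σ_j x_j = 1, the solution N(t) = exp(t ν D̃) x of the linear system dN_j/dt = ν Σ_{k≠j} (a_{kj} N_k − a_{jk} N_j) converges as t → ∞ to the unique vector N* with N*_j > 0 for all j, Σ_j N*_j = 1 and D̃ N* = 0, where D̃ is the matrix with D̃_{jk} = a_{kj} for k ≠ j and D̃_{jj} = −Σ_{k≠j} a_{jk}. -/

import Mathlib

open Finset Filter Topology

/-- The connectivity matrix `A` is irreducible. -/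
def IrreducibleMat (ℓ : ℕ) (A : Matrix (Fin ℓ) (Fin ℓ) ℝ) : Prop :=
  ∀ j k : Fin ℓ, j ≠ k → ∃ s : ℕ, 2 ≤ s ∧ ∃ c : ℕ → Fin ℓ,
    c 0 = j ∧ c (s - 1) = k ∧ ∀ i, i < s - 1 → A (c i) (c (i + 1)) ≠ 0

namespace StatAux

variable {ℓ : ℕ}

lemma exp_entry_hasSum (M : Matrix (Fin ℓ) (Fin ℓ) ℝ) (j k : Fin ℓ) :
    HasSum (fun n : ℕ => ((n.factorial : ℝ))⁻¹ • (M ^ n) j k)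
      (NormedSpace.exp M j k) := by
  letI : SeminormedRing (Matrix (Fin ℓ) (Fin ℓ) ℝ) := Matrix.linftyOpSemiNormedRing
  letI : NormedRing (Matrix (Fin ℓ) (Fin ℓ) ℝ) := Matrix.linftyOpNormedRing
  letI : NormedAlgebra ℝ (Matrix (Fin ℓ) (Fin ℓ) ℝ) := Matrix.linftyOpNormedAlgebra
  have h : HasSum (fun n : ℕ => (n.factorial : ℝ)⁻¹ • M ^ n) (NormedSpace.exp M) := by
    have := NormedSpace.expSeries_hasSum_exp (𝕂 := ℝ) M
    simp only [NormedSpace.expSeries_apply_eq] at this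
    exact this
  exact Pi.hasSum.mp (Pi.hasSum.mp h j) k

lemma pow_entry_nonneg {M : Matrix (Fin ℓ) (Fin ℓ) ℝ} (hM : ∀ j k, 0 ≤ M j k) :
    ∀ (n : ℕ) (j k : Fin ℓ), 0 ≤ (M ^ n) j k := by
  intro n
  induction n with
  | zero => intro j k; rw [pow_zero]; by_cases h : j = k <;> simp [Matrix.one_apply, h]
  | succ n ih =>
    intro j k
    rw [pow_succ, Matrix.mul_apply]
    exact Finset.sum_nonneg fun i _ => mul_nonneg (ih j i) (hM i k)

lemma pow_entry_path_le {M : Matrix (Fin ℓ) (Fin ℓ) ℝ} (hM : ∀ j k, 0 ≤ M j k) :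
    ∀ (n : ℕ) (d : ℕ → Fin ℓ),
      (∏ i ∈ Finset.range n, M (d i) (d (i + 1))) ≤ (M ^ n) (d 0) (d n) := by
  intro n
  induction n with
  | zero => intro d; simp [Matrix.one_apply]
  | succ n ih =>
    intro d
    rw [pow_succ', Matrix.mul_apply, Finset.prod_range_succ']
    rw [mul_comm]
    calc M (d 0) (d 1) * ∏ i ∈ Finset.range n, M (d (i + 1)) (d (i + 1 + 1))
        ≤ M (d 0) (d 1) * (M ^ n) (d 1) (d (n + 1)) := by
          exact mul_le_mul_of_nonneg_left (ih (fun i => d (i + 1))) (hM _ _)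
      _ ≤ ∑ i, M (d 0) i * (M ^ n) i (d (n + 1)) := by
          exact Finset.single_le_sum
            (f := fun i => M (d 0) i * (M ^ n) i (d (n + 1)))
            (fun i _ => mul_nonneg (hM _ _) (pow_entry_nonneg hM n _ _)) (Finset.mem_univ _)

lemma exp_entry_nonneg {M : Matrix (Fin ℓ) (Fin ℓ) ℝ} (hM : ∀ j k, 0 ≤ M j k) (j k : Fin ℓ) :
    0 ≤ NormedSpace.exp M j k :=
  (exp_entry_hasSum M j k).nonneg fun n => smul_nonneg (by positivity) (pow_entry_nonneg hM n j k)

lemma exp_entry_pos {M : Matrix (Fin ℓ) (Fin ℓ) ℝ} (hM : ∀ j k, 0 ≤ M j k) {j k : Fin ℓ}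
    {n : ℕ} (hn : 0 < (M ^ n) j k) : 0 < NormedSpace.exp M j k :=
  lt_of_lt_of_le (by positivity : (0:ℝ) < (n.factorial : ℝ)⁻¹ • (M ^ n) j k)
    (le_hasSum (exp_entry_hasSum M j k) n fun m _ =>
      smul_nonneg (by positivity) (pow_entry_nonneg hM m j k))

/-- exp of `N + r • 1`. -/
lemma exp_add_smul_one (N : Matrix (Fin ℓ) (Fin ℓ) ℝ) (r : ℝ) :
    NormedSpace.exp (N + r • (1 : Matrix (Fin ℓ) (Fin ℓ) ℝ)) =
      Real.exp r • NormedSpace.exp N := by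
  letI : SeminormedRing (Matrix (Fin ℓ) (Fin ℓ) ℝ) := Matrix.linftyOpSemiNormedRing
  letI : NormedRing (Matrix (Fin ℓ) (Fin ℓ) ℝ) := Matrix.linftyOpNormedRing
  letI : NormedAlgebra ℝ (Matrix (Fin ℓ) (Fin ℓ) ℝ) := Matrix.linftyOpNormedAlgebra
  rw [Matrix.exp_add_of_commute N (r • 1) (((Commute.one_right N)).smul_right r)]
  have h1 : (r • (1 : Matrix (Fin ℓ) (Fin ℓ) ℝ)) = algebraMap ℝ _ r :=
    (Algebra.algebraMap_eq_smul_one r).symm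
  have h2 : NormedSpace.exp (algebraMap ℝ (Matrix (Fin ℓ) (Fin ℓ) ℝ) r) =
      algebraMap ℝ (Matrix (Fin ℓ) (Fin ℓ) ℝ) (NormedSpace.exp r) :=
    (NormedSpace.algebraMap_exp_comm r).symm
  rw [h1, h2, ← Real.exp_eq_exp_ℝ,
    Algebra.algebraMap_eq_smul_one, mul_smul_comm, mul_one]


variable {ℓ : ℕ}



lemma colsum_pow_eq_zero {M : Matrix (Fin ℓ) (Fin ℓ) ℝ}
    (h : ∀ i, ∑ j, M j i = 0) : ∀ n, 1 ≤ n → ∀ i, ∑ j, (M ^ n) j i = 0 := by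
  intro n
  induction n with
  | zero => omega
  | succ n ih =>
    intro _ i
    rcases Nat.eq_or_lt_of_le (Nat.zero_le n) with h0 | h0
    · simpa [← h0] using h i
    · rw [show n + 1 = 1 + n by omega, pow_add, pow_one]
      simp only [Matrix.mul_apply]
      rw [Finset.sum_comm]
      have : ∀ p, ∑ j, M j p * (M ^ n) p i = (∑ j, M j p) * (M ^ n) p i := by
        intro p; rw [Finset.sum_mul]
      calc ∑ p, ∑ j, M j p * (M ^ n) p i = ∑ p, (∑ j, M j p) * (M ^ n) p i := by
            exact Finset.sum_congr rfl fun p _ => by rw [Finset.sum_mul]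
        _ = 0 := by simp [h]

/-- column sums of exp equal 1 when column sums of M are 0 -/
lemma exp_colsum_one {M : Matrix (Fin ℓ) (Fin ℓ) ℝ}
    (h : ∀ i, ∑ j, M j i = 0) (i : Fin ℓ) : ∑ j, NormedSpace.exp M j i = 1 := by
  have hs : HasSum (fun n : ℕ => ∑ j, ((n.factorial : ℝ))⁻¹ • (M ^ n) j i)
      (∑ j, NormedSpace.exp M j i) :=
    hasSum_sum fun j _ => exp_entry_hasSum M j i
  have hval : ∀ n : ℕ, (∑ j, ((n.factorial : ℝ))⁻¹ • (M ^ n) j i) =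
      if n = 0 then (1:ℝ) else 0 := by
    intro n
    rcases n with _ | n
    · simp [Matrix.one_apply, Finset.sum_ite_eq]
    · simp only [if_neg (Nat.succ_ne_zero n), smul_eq_mul, ← Finset.mul_sum]
      rw [colsum_pow_eq_zero h (n+1) (by omega) i, mul_zero]
  rw [show (fun n : ℕ => ∑ j, ((n.factorial : ℝ))⁻¹ • (M ^ n) j i)
      = fun n => if n = 0 then (1:ℝ) else 0 from funext hval] at hs
  have h2 : HasSum (fun n : ℕ => if n = 0 then (1:ℝ) else 0) 1 := by
    simpa using hasSum_ite_eq (0 : ℕ) (1:ℝ)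
  exact hs.unique h2

lemma pow_mulVec_kernel {M : Matrix (Fin ℓ) (Fin ℓ) ℝ} {v : Fin ℓ → ℝ}
    (h : M.mulVec v = 0) : ∀ n, 1 ≤ n → (M ^ n).mulVec v = 0 := by
  intro n
  induction n with
  | zero => omega
  | succ n ih =>
    intro _
    rcases Nat.eq_or_lt_of_le (Nat.zero_le n) with h0 | h0
    · simpa [← h0] using h
    · rw [pow_succ, ← Matrix.mulVec_mulVec, h, Matrix.mulVec_zero]

lemma exp_mulVec_fixed {M : Matrix (Fin ℓ) (Fin ℓ) ℝ} {v : Fin ℓ → ℝ}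
    (h : M.mulVec v = 0) : (NormedSpace.exp M).mulVec v = v := by
  funext j
  have hs : HasSum (fun n : ℕ => ∑ k, (((n.factorial : ℝ))⁻¹ • (M ^ n) j k) * v k)
      (∑ k, NormedSpace.exp M j k * v k) :=
    hasSum_sum fun k _ => (exp_entry_hasSum M j k).mul_right (v k)
  have hval : ∀ n : ℕ, (∑ k, (((n.factorial : ℝ))⁻¹ • (M ^ n) j k) * v k) =
      if n = 0 then v j else 0 := by
    intro n
    rcases n with _ | n
    · simp [Matrix.one_apply, Finset.sum_ite_eq]
    · simp only [if_neg (Nat.succ_ne_zero n), smul_eq_mul, mul_assoc, ← Finset.mul_sum]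
      have : ∑ k, (M ^ (n+1)) j k * v k = 0 := by
        have := congrFun (pow_mulVec_kernel h (n+1) (by omega)) j
        simpa [Matrix.mulVec, dotProduct] using this
      rw [this, mul_zero]
  rw [show (fun n : ℕ => ∑ k, (((n.factorial : ℝ))⁻¹ • (M ^ n) j k) * v k)
      = fun n => if n = 0 then v j else 0 from funext hval] at hs
  have h2 : HasSum (fun n : ℕ => if n = 0 then v j else 0) (v j) := by
    simpa using hasSum_ite_eq (0 : ℕ) (v j)
  have := hs.unique h2
  simpa [Matrix.mulVec, dotProduct] using this


variable {ℓ : ℕ}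

/-- l1 bound for mulVec given column-sum bounds on |entries| -/
lemma l1_mulVec_le {P : Matrix (Fin ℓ) (Fin ℓ) ℝ} {C : ℝ}
    (h : ∀ k, ∑ j, |P j k| ≤ C) (y : Fin ℓ → ℝ) :
    ∑ j, |P.mulVec y j| ≤ C * ∑ k, |y k| := by
  calc ∑ j, |P.mulVec y j| ≤ ∑ j, ∑ k, |P j k| * |y k| := by
        refine Finset.sum_le_sum fun j _ => ?_
        simp only [Matrix.mulVec, dotProduct]
        exact (Finset.abs_sum_le_sum_abs _ _).trans (le_of_eq (by simp [abs_mul]))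
    _ = ∑ k, (∑ j, |P j k|) * |y k| := by
        rw [Finset.sum_comm]; exact Finset.sum_congr rfl fun k _ => (Finset.sum_mul ..).symm
    _ ≤ ∑ k, C * |y k| := by
        exact Finset.sum_le_sum fun k _ => mul_le_mul_of_nonneg_right (h k) (abs_nonneg _)
    _ = C * ∑ k, |y k| := (Finset.mul_sum ..).symm

lemma mulVec_sum_zero {P : Matrix (Fin ℓ) (Fin ℓ) ℝ}
    (hcol : ∀ k, ∑ j, P j k = 1) {y : Fin ℓ → ℝ} (hy : ∑ k, y k = 0) :
    ∑ j, P.mulVec y j = 0 := by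
  simp only [Matrix.mulVec, dotProduct]
  rw [Finset.sum_comm]
  calc ∑ k, ∑ j, P j k * y k = ∑ k, (∑ j, P j k) * y k := by
        exact Finset.sum_congr rfl fun k _ => (Finset.sum_mul ..).symm
    _ = ∑ k, y k := by simp [hcol]
    _ = 0 := hy

lemma contraction_step {P : Matrix (Fin ℓ) (Fin ℓ) ℝ} {ε : ℝ}
    (hcol : ∀ k, ∑ j, P j k = 1) (hε : ∀ j k, ε ≤ P j k)
    {y : Fin ℓ → ℝ} (hy : ∑ k, y k = 0) :
    ∑ j, |P.mulVec y j| ≤ (1 - ℓ * ε) * ∑ k, |y k| := by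
  set Q : Matrix (Fin ℓ) (Fin ℓ) ℝ := Matrix.of fun j k => P j k - ε with hQ
  have hPQ : P.mulVec y = Q.mulVec y := by
    funext j
    simp only [Matrix.mulVec, dotProduct, hQ, Matrix.of_apply, sub_mul,
      Finset.sum_sub_distrib, ← Finset.mul_sum, hy, mul_zero, sub_zero]
  rw [hPQ]
  refine l1_mulVec_le (fun k => ?_) y
  have : ∀ j, |Q j k| = P j k - ε := fun j => abs_of_nonneg (by simpa [hQ] using hε j k)
  simp only [this, Finset.sum_sub_distrib, hcol, Finset.sum_const, Finset.card_univ,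
    Fintype.card_fin, nsmul_eq_mul]
  exact le_of_eq rfl

end StatAux

open StatAux

/-- Global asymptotic stability of the stationary population distribution: if `A` is
irreducible and `ν > 0`, then for every probability vector `x`, the solution
`N(t) = exp(t ν D̃) x` of `dN/dt = ν D̃ N` converges, as `t → ∞`, to the unique positive
probability vector `N*` with `D̃ N* = 0`; here `D̃_{jk} = a_{kj}` for `k ≠ j` and
`D̃_{jj} = −Σ_{k≠j} a_{jk}`. -/
theorem stationary_distribution_globally_asymptotically_stable
    (ℓ : ℕ) (hℓ : 1 ≤ ℓ)
    (A : Matrix (Fin ℓ) (Fin ℓ) ℝ) (hA : ∀ j k, 0 ≤ A j k) (hAdiag : ∀ j, A j j = 0)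
    (hirr : IrreducibleMat ℓ A)
    (ν : ℝ) (hν : 0 < ν)
    (Dt : Matrix (Fin ℓ) (Fin ℓ) ℝ)
    (hDt : ∀ j k, Dt j k = if j = k then -∑ i ∈ univ.erase j, A j i else A k j)
    (Nstar : Fin ℓ → ℝ) (hpos : ∀ j, 0 < Nstar j) (hsum : (∑ j, Nstar j) = 1)
    (hstat : Dt.mulVec Nstar = 0)
    (x : Fin ℓ → ℝ) (hx : ∀ j, 0 ≤ x j) (hxsum : (∑ j, x j) = 1) :
    Tendsto (fun t : ℝ => (NormedSpace.exp (t • (ν • Dt))).mulVec x)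
      atTop (nhds Nstar) := by
  set B : Matrix (Fin ℓ) (Fin ℓ) ℝ := ν • Dt with hB
  -- column sums of B are zero
  have hBcol : ∀ i, ∑ j, B j i = 0 := by
    intro i
    have h1 : ∑ j, Dt j i = 0 := by
      rw [← Finset.add_sum_erase _ _ (Finset.mem_univ i), hDt i i, if_pos rfl]
      have : ∑ j ∈ univ.erase i, Dt j i = ∑ j ∈ univ.erase i, A i j := by
        refine Finset.sum_congr rfl fun j hj => ?_
        rw [hDt j i, if_neg (Finset.ne_of_mem_erase hj)]
      rw [this]; ring
    simp only [hB, Matrix.smul_apply, smul_eq_mul, ← Finset.mul_sum, h1, mul_zero]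
  -- B annihilates Nstar
  have hBNstar : B.mulVec Nstar = 0 := by
    rw [hB, Matrix.smul_mulVec, hstat, smul_zero]
  -- the shift constant
  set c : ℝ := ν * ∑ p, ∑ q, A p q with hc
  have hc0 : 0 ≤ c :=
    mul_nonneg hν.le (Finset.sum_nonneg fun p _ => Finset.sum_nonneg fun q _ => hA p q)
  set C : Matrix (Fin ℓ) (Fin ℓ) ℝ := B + c • 1 with hCdef
  have hCoff : ∀ p q, p ≠ q → C p q = ν * A q p := by
    intro p q hpq
    simp only [hCdef, Matrix.add_apply, Matrix.smul_apply, Matrix.one_apply_ne hpq,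
      smul_eq_mul, mul_zero, add_zero, hB, hDt p q, if_neg hpq]
  have hC : ∀ p q, 0 ≤ C p q := by
    intro p q
    by_cases hpq : p = q
    · subst hpq
      simp only [hCdef, Matrix.add_apply, Matrix.smul_apply, Matrix.one_apply_eq,
        smul_eq_mul, mul_one, hB, hDt p p, if_pos rfl]
      have h2 : ∑ i ∈ univ.erase p, A p i ≤ ∑ p', ∑ q', A p' q' := by
        calc ∑ i ∈ univ.erase p, A p i ≤ ∑ i, A p i :=
              Finset.sum_le_sum_of_subset_of_nonneg (Finset.subset_univ _)
                (fun i _ _ => hA p i)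
          _ ≤ ∑ p', ∑ q', A p' q' :=
              Finset.single_le_sum (f := fun p' => ∑ q', A p' q')
                (fun p' _ => Finset.sum_nonneg fun q' _ => hA p' q') (Finset.mem_univ p)
      have h4 : ν * ∑ i ∈ univ.erase p, A p i ≤ c := by
        rw [hc]; exact mul_le_mul_of_nonneg_left h2 hν.le
      have h5 : ν * -∑ i ∈ univ.erase p, A p i = -(ν * ∑ i ∈ univ.erase p, A p i) := by ring
      simp only [if_true, eq_self_iff_true]
      linarith
    · rw [hCoff p q hpq]
      exact mul_nonneg hν.le (hA q p)
  -- decomposition of t • B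
  have hdecomp : ∀ t : ℝ, t • B = t • C + (-(t * c)) • (1 : Matrix (Fin ℓ) (Fin ℓ) ℝ) := by
    intro t
    rw [hCdef]
    module
  have hPexp : ∀ t : ℝ, NormedSpace.exp (t • B)
      = Real.exp (-(t * c)) • NormedSpace.exp (t • C) := by
    intro t
    rw [hdecomp t, exp_add_smul_one]
  -- nonnegativity of entries for t ≥ 0
  have hPnn : ∀ t : ℝ, 0 ≤ t → ∀ j k, 0 ≤ NormedSpace.exp (t • B) j k := by
    intro t ht j k
    rw [hPexp t]
    have : ∀ p q, 0 ≤ (t • C) p q := fun p q => by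
      simpa [Matrix.smul_apply, smul_eq_mul] using mul_nonneg ht (hC p q)
    simpa [Matrix.smul_apply, smul_eq_mul] using
      mul_nonneg (Real.exp_pos _).le (exp_entry_nonneg this j k)
  -- column sums equal one
  have hPcol : ∀ t : ℝ, ∀ i, ∑ j, NormedSpace.exp (t • B) j i = 1 := by
    intro t i
    refine exp_colsum_one (fun i' => ?_) i
    simp only [Matrix.smul_apply, smul_eq_mul, ← Finset.mul_sum, hBcol i', mul_zero]
  -- Nstar fixed
  have hPfix : ∀ t : ℝ, (NormedSpace.exp (t • B)).mulVec Nstar = Nstar := by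
    intro t
    refine exp_mulVec_fixed ?_
    rw [Matrix.smul_mulVec, hBNstar, smul_zero]
  -- positivity of entries of E = exp B
  set E : Matrix (Fin ℓ) (Fin ℓ) ℝ := NormedSpace.exp B with hE
  have hEpos : ∀ j k, 0 < E j k := by
    intro j k
    have h1 := hPexp 1
    simp only [one_smul] at h1
    rw [hE, h1]
    have hCpos : 0 < NormedSpace.exp C j k := by
      by_cases hjk : j = k
      · subst hjk
        refine exp_entry_pos hC (n := 0) ?_
        rw [pow_zero, Matrix.one_apply_eq]; norm_num
      · obtain ⟨s, hs2, c', hc0', hcs', hcpath⟩ := hirr k j (Ne.symm hjk)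
        set d : ℕ → Fin ℓ := fun i => c' (s - 1 - i) with hd
        have hd0 : d 0 = j := by simp [hd, hcs']
        have hds : d (s - 1) = k := by simp [hd, hc0']
        refine exp_entry_pos hC (n := s - 1) ?_
        have hle := pow_entry_path_le hC (s - 1) d
        rw [hd0, hds] at hle
        refine lt_of_lt_of_le ?_ hle
        refine Finset.prod_pos fun i hi => ?_
        rw [Finset.mem_range] at hi
        set m : ℕ := s - 2 - i with hm
        have e1 : d i = c' (m + 1) := by simp only [hd, hm]; congr 1; omega
        have e2 : d (i + 1) = c' m := by simp only [hd, hm]; congr 1; omega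
        have hmlt : m < s - 1 := by omega
        have hAne := hcpath m hmlt
        have hne : c' (m + 1) ≠ c' m := by
          intro h; rw [← h] at hAne; exact hAne (hAdiag _)
        rw [e1, e2, hCoff _ _ hne]
        exact mul_pos hν (lt_of_le_of_ne (hA _ _) (Ne.symm hAne))
    simpa [Matrix.smul_apply, smul_eq_mul] using mul_pos (Real.exp_pos _) hCpos
  -- minimum entry
  obtain ⟨⟨j0, k0⟩, -, hmin⟩ := Finset.exists_min_image (Finset.univ : Finset (Fin ℓ × Fin ℓ))
    (fun p => E p.1 p.2) ⟨(⟨0, hℓ⟩, ⟨0, hℓ⟩), Finset.mem_univ _⟩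
  set ε : ℝ := E j0 k0 with hεdef
  have hεpos : 0 < ε := hEpos j0 k0
  have hεle : ∀ j k, ε ≤ E j k := fun j k => hmin (j, k) (Finset.mem_univ _)
  set q : ℝ := 1 - ℓ * ε with hq
  have hEcol : ∀ i, ∑ j, E j i = 1 := by
    intro i
    have := hPcol 1 i
    rwa [one_smul] at this
  have hq0 : 0 ≤ q := by
    have h1 : (ℓ : ℝ) * ε ≤ ∑ j, E j k0 := by
      calc (ℓ : ℝ) * ε = ∑ _j : Fin ℓ, ε := by
            simp [Finset.sum_const, Finset.card_univ, mul_comm]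
        _ ≤ ∑ j, E j k0 := Finset.sum_le_sum fun j _ => hεle j k0
    rw [hEcol k0] at h1
    simp only [hq]; linarith
  have hq1 : q < 1 := by
    have : (0:ℝ) < ℓ * ε := by
      have : (1:ℝ) ≤ ℓ := by exact_mod_cast hℓ
      nlinarith
    simp only [hq]; linarith
  -- iteration
  set y0 : Fin ℓ → ℝ := x - Nstar with hy0
  have hy0sum : ∑ k, y0 k = 0 := by
    simp only [hy0, Pi.sub_apply, Finset.sum_sub_distrib, hxsum, hsum, sub_self]
  set L : ℝ := ∑ k, |y0 k| with hL
  have hL0 : 0 ≤ L := Finset.sum_nonneg fun k _ => abs_nonneg _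
  have hiter : ∀ n : ℕ, (∑ k, (E ^ n).mulVec y0 k = 0) ∧
      (∑ j, |(E ^ n).mulVec y0 j| ≤ q ^ n * L) := by
    intro n
    induction n with
    | zero => constructor <;> simp [Matrix.one_mulVec, hy0sum, hL]
    | succ n ih =>
      have hsplit : (E ^ (n + 1)).mulVec y0 = E.mulVec ((E ^ n).mulVec y0) := by
        rw [Matrix.mulVec_mulVec, ← pow_succ']
      constructor
      · rw [hsplit]
        exact mulVec_sum_zero hEcol ih.1
      · rw [hsplit]
        calc ∑ j, |E.mulVec ((E ^ n).mulVec y0) j|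
            ≤ (1 - ℓ * ε) * ∑ k, |(E ^ n).mulVec y0 k| :=
              contraction_step hEcol hεle ih.1
          _ ≤ q * (q ^ n * L) := mul_le_mul_of_nonneg_left ih.2 hq0
          _ = q ^ (n + 1) * L := by ring
  -- eventual L1 bound
  have hbound : ∀ t : ℝ, 0 ≤ t →
      ∑ j, |((NormedSpace.exp (t • B)).mulVec x - Nstar) j| ≤ q ^ ⌊t⌋₊ * L := by
    intro t ht
    set n : ℕ := ⌊t⌋₊ with hn
    set s : ℝ := t - n with hs
    have hs0 : 0 ≤ s := by
      have := Nat.floor_le ht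
      simp only [hs]; linarith
    have htsum : t • B = s • B + (n : ℝ) • B := by
      rw [← add_smul]
      congr 1
      simp only [hs]; ring
    have hcomm : Commute (s • B) ((n : ℝ) • B) :=
      ((Commute.refl B).smul_left s).smul_right (n : ℝ)
    have hEn : NormedSpace.exp ((n : ℝ) • B) = E ^ n := by
      rw [Nat.cast_smul_eq_nsmul, Matrix.exp_nsmul, hE]
    have hsplit : NormedSpace.exp (t • B) =
        NormedSpace.exp (s • B) * E ^ n := by
      rw [htsum, Matrix.exp_add_of_commute _ _ hcomm, hEn]
    have hdiff : (NormedSpace.exp (t • B)).mulVec x - Nstar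
        = (NormedSpace.exp (s • B)).mulVec ((E ^ n).mulVec y0) := by
      have h1 : (NormedSpace.exp (t • B)).mulVec x - Nstar
          = (NormedSpace.exp (t • B)).mulVec y0 := by
        rw [hy0, Matrix.mulVec_sub, hPfix t]
      rw [h1, hsplit, ← Matrix.mulVec_mulVec]
    rw [hdiff]
    calc ∑ j, |(NormedSpace.exp (s • B)).mulVec ((E ^ n).mulVec y0) j|
        ≤ 1 * ∑ k, |(E ^ n).mulVec y0 k| := by
          refine l1_mulVec_le (fun k => ?_) _
          have : ∀ j, |NormedSpace.exp (s • B) j k| = NormedSpace.exp (s • B) j k :=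
            fun j => abs_of_nonneg (hPnn s hs0 j k)
          simp only [this]
          exact le_of_eq (hPcol s k)
      _ ≤ q ^ n * L := by rw [one_mul]; exact (hiter n).2
  -- conclude
  rw [tendsto_iff_norm_sub_tendsto_zero]
  have hg : Tendsto (fun t : ℝ => q ^ ⌊t⌋₊ * L) atTop (nhds 0) := by
    have h1 : Tendsto (fun n : ℕ => q ^ n * L) atTop (nhds 0) := by
      simpa using (tendsto_pow_atTop_nhds_zero_of_lt_one hq0 hq1).mul_const L
    exact h1.comp tendsto_nat_floor_atTop
  refine squeeze_zero' (Eventually.of_forall fun t => norm_nonneg _) ?_ hg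
  · filter_upwards [eventually_ge_atTop (0 : ℝ)] with t ht
    have hb := hbound t ht
    refine (pi_norm_le_iff_of_nonneg (by positivity)).mpr fun i => ?_
    calc ‖((NormedSpace.exp (t • B)).mulVec x - Nstar) i‖
        = |((NormedSpace.exp (t • B)).mulVec x - Nstar) i| := rfl
      _ ≤ ∑ j, |((NormedSpace.exp (t • B)).mulVec x - Nstar) j| :=
          Finset.single_le_sum
            (f := fun j => |((NormedSpace.exp (t • B)).mulVec x - Nstar) j|)
            (fun j _ => abs_nonneg _) (Finset.mem_univ i)
      _ ≤ q ^ ⌊t⌋₊ * L := hb
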